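/- For the reduced word 𝐢^D of type D_n: (a) for each 1 ≤ i ≤ n−1, the positive roots η preceding α_i = β_{i,i} in the induced order with (α_i | η) < 0 are exactly, in order, β_{1,i−1}, γ_{1,i+1}, β_{2,i−1}, γ_{2,i+1}, …, β_{i−1,i−1}, γ_{i−1,i+1}, with corresponding ν = η + α_i given by β_{j,i} for η = β_{j,i−1} and γ_{j,i} for η = γ_{j,i+1}; (b) for i = n, the positive roots η preceding α_n = γ_{n−1,n} in the induced order with (α_n | η) < 0 are exactly, in order, β_{1,n−2}, β_{1,n−1}, β_{2,n−2}, β_{2,n−1}, …, β_{n−2,n−2}, β_{n−2,n−1}, with ν = γ_{j,n} for η = β_{j,n−2} and ν = γ_{j,n−1} for η = β_{j,n−1}. Consequently, for any Kostant partition 𝐜, the bracket string S_i^{𝐢^D}(𝐜) is: for i ≤ n−1, the concatenation over j = 1, …, i−1 of c_{β_{j,i}} ')'s, c_{β_{j,i−1}} '('s, c_{γ_{j,i}} ')'s, c_{γ_{j,i+1}} '('s, followed by c_{β_{i,i}} ')'s; and for i = n, the concatenation over j = 1, …, n−2 of c_{γ_{j,n}} ')'s, c_{β_{j,n−2}} '('s,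 c_{γ_{j,n−1}} ')'s, c_{β_{j,n−1}} '('s, followed by c_{γ_{n−1,n}} ')'s. -/

import Mathlib

open scoped Classical

noncomputable section

/-- Standard basis vector `e i` (1-based coordinates, ambient `ℤ^n` sits inside `ℕ → ℤ`). -/
def stdE (i : ℕ) : ℕ → ℤ := fun j => if j = i then 1 else 0

/-- Type `D_n` simple roots: `α_i = e_i - e_(i+1)` for `1 ≤ i ≤ n-1`, `α_n = e_(n-1) + e_n`. -/
def alphaD (n i : ℕ) : ℕ → ℤ := if i = n then stdE (n-1) + stdE n else stdE i - stdE (i+1)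

/-- Positive root `β_(i,k) = α_i + ⋯ + α_k = e_i - e_(k+1)` (for `1 ≤ i ≤ k ≤ n-1`). -/
def betaD (i k : ℕ) : ℕ → ℤ := stdE i - stdE (k+1)

/-- Positive root `γ_(i,k) = α_i + ⋯ + α_(n-2) + α_n + α_(n-1) + ⋯ + α_k = e_i + e_k`
(for `1 ≤ i < k ≤ n`). -/
def gammaD (i k : ℕ) : ℕ → ℤ := stdE i + stdE k

/-- `β` is a positive root of type `D_n`. -/
def PosRootD (n : ℕ) (β : ℕ → ℤ) : Prop :=
  (∃ i k, 1 ≤ i ∧ i ≤ k ∧ k ≤ n-1 ∧ β = betaD i k) ∨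
  (∃ i k, 1 ≤ i ∧ i < k ∧ k ≤ n ∧ β = gammaD i k)

/-- The simple reflection `s_i` of `W(D_n)` acting on `ℤ^n`: for `i ≤ n-1` it swaps
coordinates `i` and `i+1`; `s_n` swaps coordinates `n-1` and `n` and negates both. -/
def sDap (n i : ℕ) (v : ℕ → ℤ) : ℕ → ℤ :=
  if i = n then fun j => if j = n-1 then -(v n) else if j = n then -(v (n-1)) else v j
  else fun j => if j = i then v (i+1) else if j = i+1 then v i else v j

/-- The action of the product `s_(i₁) ⋯ s_(i_N)` on a vector. -/
def actD (n : ℕ) (w : List ℕ) (v : ℕ → ℤ) : ℕ → ℤ := w.foldr (sDap n) v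

/-- The induced root sequence `β_k = s_(i₁)⋯s_(i_(k-1)) (α_(i_k))` of a word (0-indexed). -/
def rootSeqD (n : ℕ) (w : List ℕ) : List (ℕ → ℤ) :=
  (List.range w.length).map fun k => actD n (w.take k) (alphaD n (w.getD k 0))

/-- The block `(i, i+1, …, n-1, n, n-2, n-3, …, i)` of the word `𝐢^D`. -/
def blockD (n i : ℕ) : List ℕ :=
  ((List.range (n-i)).map (· + i)) ++ [n] ++ (((List.range (n-1-i)).map (· + i)).reverse)

/-- The word `𝐢^D`: the blocks `(i, i+1, …, n-1, n, n-2, …, i)` for `i = 1, …, n-2`,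
followed by `(n-1, n)`. -/
def wordD (n : ℕ) : List ℕ :=
  ((List.range (n-2)).flatMap fun i' => blockD n (i'+1)) ++ [n-1, n]

/-- Standard inner product on `ℤ^n` (coordinates `1,…,n`; index `0` unused). -/
def ipD (n : ℕ) (v u : ℕ → ℤ) : ℤ := ∑ j ∈ Finset.range (n+1), v j * u j

/-- The roots `η₁, …, η_k`: those prior to `α_i` in the induced order of `w` with
`(α_i | η) < 0`, in order (as a 0-indexed list). -/
def etaListD (n i : ℕ) (w : List ℕ) : List (ℕ → ℤ) :=
  ((rootSeqD n w).takeWhile fun β => decide (β ≠ alphaD n i)).filter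
    fun η => decide (ipD n (alphaD n i) η < 0)

/-- The bracket string `S_i^𝐢(𝐜)`: for each `j`, `c_(ν_(j+1))` ')'s labeled `j` followed by
`c_(η_(j+1))` '('s labeled `j`, and finally `c_(α_i)` ')'s labeled `k`. Here `ν = η + α_i`. -/
def brStringD (n i : ℕ) (w : List ℕ) (c : (ℕ → ℤ) → ℕ) : List (Bool × ℕ) :=
  ((List.range (etaListD n i w).length).flatMap fun j =>
    List.replicate (c ((etaListD n i w).getD j 0 + alphaD n i)) (false, j) ++
    List.replicate (c ((etaListD n i w).getD j 0)) (true, j)) ++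
  List.replicate (c (alphaD n i)) (false, (etaListD n i w).length)

section Helpers
open List

lemma actD_append (n : ℕ) (u v : List ℕ) (x : ℕ → ℤ) :
    actD n (u ++ v) x = actD n u (actD n v x) := by
  simp [actD, List.foldr_append]

lemma rootSeqD_append (n : ℕ) (u v : List ℕ) :
    rootSeqD n (u ++ v) = rootSeqD n u ++ (rootSeqD n v).map (actD n u) := by
  unfold rootSeqD
  rw [List.length_append, List.range_add, List.map_append, List.map_map]
  congr 1
  · apply List.map_congr_left
    intro k hk
    rw [List.mem_range] at hk
    rw [List.take_append_of_le_length (le_of_lt hk), List.getD_append _ _ _ _ hk]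
  · rw [List.map_map]
    apply List.map_congr_left
    intro k hk
    rw [List.mem_range] at hk
    have h1 : u.length + k - u.length = k := by omega
    simp only [Function.comp_apply]
    rw [List.take_append, List.getD_append_right _ _ _ _ (by omega), h1, actD_append,
    List.take_of_length_le (Nat.le_add_right u.length k)]

/-- ascending chain action -/
lemma asc_act (n : ℕ) : ∀ (m i : ℕ) (v : ℕ → ℤ), 1 ≤ i → i + m ≤ n →
    actD n ((List.range m).map (· + i)) v =
      fun j => if j = i then v (i+m) else if i+1 ≤ j ∧ j ≤ i+m then v (j-1) else v j := by
  intro m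
  induction m with
  | zero =>
    intro i v hi hm; funext j
    simp only [actD, List.range_zero, List.map_nil, List.foldr_nil]
    split_ifs <;> first | rfl | omega | (congr 1 <;> omega)
  | succ m ih =>
    intro i v hi hm
    have hsplit : (List.range (m+1)).map (· + i) = i :: (List.range m).map (· + (i+1)) := by
      rw [List.range_succ_eq_map, List.map_cons, List.map_map]
      simp only [Nat.zero_add]
      congr 1
      apply List.map_congr_left; intro x _; simp [Nat.succ_eq_add_one]; omega
    rw [hsplit]
    show sDap n i (actD n ((List.range m).map (· + (i+1))) v) = _
    rw [ih (i+1) v (by omega) (by omega)]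
    funext j
    have hin : i ≠ n := by omega
    simp only [sDap, if_neg hin]
    split_ifs <;> first | rfl | omega | (exfalso; omega) | (congr 1 <;> omega)

lemma revmap (d : ℕ) : ∀ (a : ℕ), ((List.range d).map (· + a)).reverse
    = (List.range d).map (fun t => a + d - 1 - t) := by
  induction d with
  | zero => intro a; simp
  | succ d ih =>
    intro a
    have h1 : (List.range (d+1)).map (· + a) = a :: (List.range d).map (· + (a+1)) := by
      rw [List.range_succ_eq_map, List.map_cons, List.map_map]
      simp only [Nat.zero_add]
      congr 1
      apply List.map_congr_left; intro x _; simp [Nat.succ_eq_add_one]; omega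
    rw [h1, List.reverse_cons, ih (a+1), List.range_succ, List.map_append]
    simp only [List.map_cons, List.map_nil]
    congr 1
    · apply List.map_congr_left; intro x hx; rw [List.mem_range] at hx; omega
    · congr 1; omega

/-- descending chain action -/
lemma desc_act (n : ℕ) : ∀ (d a : ℕ) (v : ℕ → ℤ), 1 ≤ a → d = n - 1 - a → a ≤ n - 1 →
    actD n (((List.range d).map (· + a)).reverse) v =
      fun j => if j = n-1 then v a else if a ≤ j ∧ j ≤ n-2 then v (j+1) else v j := by
  intro d
  induction d with
  | zero =>
    intro a v ha hd han; funext j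
    simp only [actD, List.range_zero, List.map_nil, List.reverse_nil, List.foldr_nil]
    split_ifs <;> first | rfl | omega | (congr 1 <;> omega)
  | succ d ih =>
    intro a v ha hd han
    have hsplit : (List.range (d+1)).map (· + a) = a :: (List.range d).map (· + (a+1)) := by
      rw [List.range_succ_eq_map, List.map_cons, List.map_map]
      simp only [Nat.zero_add]
      congr 1
      apply List.map_congr_left; intro x _; simp [Nat.succ_eq_add_one]; omega
    rw [hsplit, List.reverse_cons, actD_append]
    have hact : actD n [a] v = sDap n a v := rfl
    rw [hact, ih (a+1) (sDap n a v) (by omega) (by omega) (by omega)]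
    funext j
    have hne : a ≠ n := by omega
    simp only [sDap, if_neg hne]
    split_ifs <;> first | rfl | omega | (congr 1 <;> omega) | (exfalso; omega)

/-- single block action -/
lemma block_act (n i : ℕ) (v : ℕ → ℤ) (hi : 1 ≤ i) (hin : i ≤ n-1) (hn : 4 ≤ n) :
    actD n (blockD n i) v = fun j => if j = i then -v i else if j = n then -v n else v j := by
  unfold blockD
  rw [actD_append, actD_append]
  have hact : actD n [n] = sDap n n := rfl
  rw [hact, desc_act n (n-1-i) i v hi rfl hin,
    asc_act n (n-i) i _ hi (by omega)]
  funext j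
  have hnn : (n : ℕ) = n := rfl
  simp only [sDap, if_pos hnn]
  beta_reduce
  split_ifs <;> beta_reduce <;> (try split_ifs) <;>
    first | rfl | omega | (congr 1 <;> omega) | (congr 2 <;> omega) | (exfalso; omega) | (rw [neg_inj]; congr 1 <;> omega)

/-- cumulative action of blocks 1..j -/
def PDact (n j : ℕ) (v : ℕ → ℤ) : ℕ → ℤ :=
  fun m => if 1 ≤ m ∧ m ≤ j then -v m else if m = n then (-1)^j * v n else v m

lemma prefix_act (n : ℕ) (hn : 4 ≤ n) : ∀ (j : ℕ), j ≤ n-2 → ∀ v,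
    actD n ((List.range j).flatMap fun i' => blockD n (i'+1)) v = PDact n j v := by
  intro j
  induction j with
  | zero =>
    intro _ v; funext m
    simp only [List.range_zero, List.flatMap_nil, actD, List.foldr_nil, PDact, pow_zero, one_mul]
    split_ifs <;> first | rfl | omega | (congr 1 <;> omega)
  | succ j ih =>
    intro hj v
    rw [List.range_succ, List.flatMap_append, actD_append]
    simp only [List.flatMap_cons, List.flatMap_nil, List.append_nil]
    rw [block_act n (j+1) v (by omega) (by omega) hn, ih (by omega)]
    funext m
    simp only [PDact]
    beta_reduce
    split_ifs <;> first | rfl | omega | (congr 1 <;> omega) | (exfalso; omega) |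
      (rw [pow_succ]; ring) | (rw [neg_inj]; congr 1 <;> omega)

/-- the parity-dependent pair in the induced root order of a block -/
def pairD (n i : ℕ) : List (ℕ → ℤ) :=
  if i % 2 = 1 then [betaD i (n-1), gammaD i n] else [gammaD i n, betaD i (n-1)]

/-- the root sequence of a block, before applying the preceding blocks -/
def freshD (n i : ℕ) : List (ℕ → ℤ) :=
  ((List.range (n-1-i)).map fun m => betaD i (i+m)) ++ [betaD i (n-1), gammaD i n] ++
    ((List.range (n-1-i)).map fun t => gammaD i (n-1-t))

/-- the root sequence contributed by block i within the whole word -/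
def GDlist (n i : ℕ) : List (ℕ → ℤ) :=
  ((List.range (n-1-i)).map fun m => betaD i (i+m)) ++ pairD n i ++
    ((List.range (n-1-i)).map fun t => gammaD i (n-1-t))

lemma item_beta (n i k : ℕ) (hi : 1 ≤ i) (hk : i + k ≤ n - 1) (hn : 4 ≤ n) :
    actD n ((List.range k).map (· + i)) (alphaD n (k+i)) = betaD i (i+k) := by
  have h1 : alphaD n (k+i) = stdE (k+i) - stdE (k+i+1) := by rw [alphaD, if_neg (by omega)]
  rw [h1, asc_act n k i _ hi (by omega)]
  funext j
  simp only [betaD, stdE, Pi.sub_apply]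
  beta_reduce
  split_ifs <;> omega

lemma item_mid (n i : ℕ) (hi : 1 ≤ i) (hin : i ≤ n-1) (hn : 4 ≤ n) :
    actD n ((List.range (n-i)).map (· + i)) (alphaD n n) = gammaD i n := by
  rw [alphaD, if_pos rfl, asc_act n (n-i) i _ hi (by omega)]
  funext j
  simp only [gammaD, stdE, Pi.add_apply]
  beta_reduce
  split_ifs <;> omega

lemma item_gamma (n i t : ℕ) (hi : 1 ≤ i) (hin : i ≤ n-1) (ht : t < n-1-i) (hn : 4 ≤ n) :
    actD n ((List.range (n-i)).map (· + i)) (sDap n n (stdE (n-2-t) - stdE (n-1)))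
      = gammaD i (n-1-t) := by
  have h0 : sDap n n (stdE (n-2-t) - stdE (n-1)) = stdE (n-2-t) + stdE n := by
    funext j
    simp only [sDap, eq_self_iff_true, if_true, stdE, Pi.sub_apply, Pi.add_apply]
    split_ifs <;> omega
  rw [h0, asc_act n (n-i) i _ hi (by omega)]
  funext j
  simp only [gammaD, stdE, Pi.add_apply]
  beta_reduce
  split_ifs <;> omega

lemma asc_rootSeq (n i m : ℕ) (hi : 1 ≤ i) (hm : i + m ≤ n) (hn : 4 ≤ n) :
    rootSeqD n ((List.range m).map (· + i)) = (List.range m).map fun k => betaD i (i+k) := by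
  unfold rootSeqD
  rw [List.length_map, List.length_range]
  apply List.map_congr_left
  intro k hk; rw [List.mem_range] at hk
  have h1 : List.take k ((List.range m).map (· + i)) = (List.range k).map (· + i) := by
    rw [← List.map_take, List.take_range, Nat.min_eq_left hk.le]
  have h2 : ((List.range m).map (· + i)).getD k 0 = k + i := by
    rw [List.getD_eq_getElem _ _ (by simpa using hk)]
    simp
  rw [h1, h2, item_beta n i k hi (by omega) hn]

lemma desc_rootSeq (n i : ℕ) (hi : 1 ≤ i) (hin : i ≤ n-1) (hn : 4 ≤ n) :
    rootSeqD n (((List.range (n-1-i)).map (· + i)).reverse)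
      = (List.range (n-1-i)).map fun t => stdE (n-2-t) - stdE (n-1) := by
  rw [revmap]
  have hL : (List.range (n-1-i)).map (fun t => i + (n-1-i) - 1 - t)
      = (List.range (n-1-i)).map (fun t => n-2-t) := by
    apply List.map_congr_left; intro t ht; rw [List.mem_range] at ht; omega
  rw [hL]
  unfold rootSeqD
  rw [List.length_map, List.length_range]
  apply List.map_congr_left
  intro t ht; rw [List.mem_range] at ht
  have h1 : List.take t ((List.range (n-1-i)).map (fun t => n-2-t))
      = (List.range t).map (fun s => n-2-s) := by
    rw [← List.map_take, List.take_range, Nat.min_eq_left ht.le]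
  have h2 : ((List.range (n-1-i)).map (fun t => n-2-t)).getD t 0 = n-2-t := by
    rw [List.getD_eq_getElem _ _ (by simpa using ht)]
    simp
  rw [h1, h2]
  have h3 : (List.range t).map (fun s => n-2-s) = ((List.range t).map (· + (n-1-t))).reverse := by
    rw [revmap]
    apply List.map_congr_left; intro s hs; rw [List.mem_range] at hs; omega
  rw [h3, desc_act n t (n-1-t) _ (by omega) (by omega) (by omega)]
  have h4 : alphaD n (n-2-t) = stdE (n-2-t) - stdE (n-2-t+1) := by rw [alphaD, if_neg (by omega)]
  rw [h4]
  funext j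
  simp only [stdE, Pi.sub_apply]
  beta_reduce
  split_ifs <;> omega

lemma rootSeq_single (n a : ℕ) : rootSeqD n [a] = [alphaD n a] := by
  rw [rootSeqD, show ([a] : List ℕ).length = 1 from rfl, show List.range 1 = [0] from rfl]
  simp [actD]

lemma fresh_rootSeq (n i : ℕ) (hi : 1 ≤ i) (hin : i ≤ n-1) (hn : 4 ≤ n) :
    rootSeqD n (blockD n i) = freshD n i := by
  unfold blockD freshD
  rw [List.append_assoc, rootSeqD_append, rootSeqD_append, rootSeq_single,
    asc_rootSeq n i (n-i) hi (by omega) hn, desc_rootSeq n i hi hin hn]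
  have hact1 : actD n [n] = sDap n n := rfl
  rw [hact1]
  have hsplit : (List.range (n-i)).map (fun k => betaD i (i+k))
      = ((List.range (n-1-i)).map fun k => betaD i (i+k)) ++ [betaD i (n-1)] := by
    have h5 : n - i = (n-1-i) + 1 := by omega
    rw [h5, List.range_succ, List.map_append, List.map_cons, List.map_nil]
    have h6 : i + (n-1-i) = n-1 := by omega
    rw [h6]
  rw [hsplit]
  simp only [List.map_cons, List.map_append, List.map_map, List.map_nil]
  rw [item_mid n i hi hin hn]
  have hmap : (List.map (actD n ((List.range (n-i)).map (· + i)) ∘ sDap n n ∘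
        fun t => stdE (n-2-t) - stdE (n-1)) (List.range (n-1-i)))
      = (List.range (n-1-i)).map fun t => gammaD i (n-1-t) := by
    apply List.map_congr_left
    intro t ht; rw [List.mem_range] at ht
    simp only [Function.comp_apply]
    exact item_gamma n i t hi hin ht hn
  rw [hmap]
  simp

lemma PD_beta (n j i k : ℕ) (hj : j < i) (hk : j < k+1) (hkn : k+1 < n) (hin : i < n) :
    PDact n j (betaD i k) = betaD i k := by
  funext m
  simp only [PDact, betaD, stdE, Pi.sub_apply]
  split_ifs <;> first | omega | (simp; omega) | simp

lemma PD_gamma (n j i k : ℕ) (hj : j < i) (hk : j < k) (hkn : k < n) (hin : i < n) :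
    PDact n j (gammaD i k) = gammaD i k := by
  funext m
  simp only [PDact, gammaD, stdE, Pi.add_apply]
  split_ifs <;> first | omega | (simp; omega) | simp

lemma PD_betan_even (n j i : ℕ) (he : j % 2 = 0) (hj : j < i) (hin : i < n) (hn : 4 ≤ n) :
    PDact n j (betaD i (n-1)) = betaD i (n-1) := by
  have hp : (-1:ℤ)^j = 1 := Even.neg_one_pow (Nat.even_iff.mpr he)
  funext m
  simp only [PDact, betaD, stdE, Pi.sub_apply, hp, one_mul]
  split_ifs <;> omega

lemma PD_betan_odd (n j i : ℕ) (ho : j % 2 = 1) (hj : j < i) (hin : i < n) (hn : 4 ≤ n) :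
    PDact n j (betaD i (n-1)) = gammaD i n := by
  have hp : (-1:ℤ)^j = -1 := Odd.neg_one_pow (Nat.odd_iff.mpr ho)
  funext m
  simp only [PDact, betaD, gammaD, stdE, Pi.sub_apply, Pi.add_apply, hp, neg_one_mul]
  split_ifs <;> omega

lemma PD_gamman_even (n j i : ℕ) (he : j % 2 = 0) (hj : j < i) (hin : i < n) (hn : 4 ≤ n) :
    PDact n j (gammaD i n) = gammaD i n := by
  have hp : (-1:ℤ)^j = 1 := Even.neg_one_pow (Nat.even_iff.mpr he)
  funext m
  simp only [PDact, gammaD, stdE, Pi.add_apply, hp, one_mul]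
  split_ifs <;> omega

lemma PD_gamman_odd (n j i : ℕ) (ho : j % 2 = 1) (hj : j < i) (hin : i < n) (hn : 4 ≤ n) :
    PDact n j (gammaD i n) = betaD i (n-1) := by
  have hp : (-1:ℤ)^j = -1 := Odd.neg_one_pow (Nat.odd_iff.mpr ho)
  funext m
  simp only [PDact, betaD, gammaD, stdE, Pi.sub_apply, Pi.add_apply, hp, neg_one_mul]
  split_ifs <;> omega

lemma mapPG (n j : ℕ) (hn : 4 ≤ n) (hj : j ≤ n-2) :
    (freshD n (j+1)).map (PDact n j) = GDlist n (j+1) := by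
  unfold freshD GDlist
  rw [List.map_append, List.map_append]
  congr 1
  · congr 1
    · rw [List.map_map]
      apply List.map_congr_left
      intro m hm; rw [List.mem_range] at hm
      exact PD_beta n j (j+1) (j+1+m) (by omega) (by omega) (by omega) (by omega)
    · simp only [List.map_cons, List.map_nil, pairD]
      rcases Nat.mod_two_eq_zero_or_one j with he | ho
      · rw [PD_betan_even n j (j+1) he (by omega) (by omega) hn,
          PD_gamman_even n j (j+1) he (by omega) (by omega) hn, if_pos (by omega)]
      · rw [PD_betan_odd n j (j+1) ho (by omega) (by omega) hn,
          PD_gamman_odd n j (j+1) ho (by omega) (by omega) hn, if_neg (by omega)]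
  · rw [List.map_map]
    apply List.map_congr_left
    intro t ht; rw [List.mem_range] at ht
    exact PD_gamma n j (j+1) (n-1-t) (by omega) (by omega) (by omega) (by omega)

lemma block_last (n : ℕ) (hn : 4 ≤ n) : blockD n (n-1) = [n-1, n] := by
  rw [blockD, show n - (n-1) = 1 by omega, show n-1-(n-1) = 0 by omega, show List.range 1 = [0] from rfl]
  simp

lemma word_decomp (n : ℕ) (hn : 4 ≤ n) :
    wordD n = (List.range (n-1)).flatMap fun i' => blockD n (i'+1) := by
  rw [wordD, show n-1 = (n-2)+1 by omega, List.range_succ, List.flatMap_append]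
  simp only [List.flatMap_cons, List.flatMap_nil, List.append_nil]
  rw [show (n-2)+1 = n-1 by omega, block_last n hn]

lemma main_rootSeq_aux (n : ℕ) (hn : 4 ≤ n) : ∀ j, j ≤ n-1 →
    rootSeqD n ((List.range j).flatMap fun i' => blockD n (i'+1))
      = (List.range j).flatMap fun i' => GDlist n (i'+1) := by
  intro j
  induction j with
  | zero => intro _; rfl
  | succ j ih =>
    intro hj
    rw [List.range_succ, List.flatMap_append, List.flatMap_append, rootSeqD_append, ih (by omega)]
    simp only [List.flatMap_cons, List.flatMap_nil, List.append_nil]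
    congr 1
    rw [fresh_rootSeq n (j+1) (by omega) (by omega) hn]
    have hmc : (freshD n (j+1)).map (actD n ((List.range j).flatMap fun i' => blockD n (i'+1)))
        = (freshD n (j+1)).map (PDact n j) := by
      apply List.map_congr_left
      intro x _
      rw [prefix_act n hn j (by omega) x]
    rw [hmc, mapPG n j hn (by omega)]

lemma word_rootSeq (n : ℕ) (hn : 4 ≤ n) :
    rootSeqD n (wordD n) = (List.range (n-1)).flatMap fun i' => GDlist n (i'+1) := by
  rw [word_decomp n hn, main_rootSeq_aux n hn (n-1) le_rfl]

lemma takeWhile_middle {α : Type*} (p : α → Bool) (l1 l2 : List α) (a : α)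
    (h1 : ∀ x ∈ l1, p x = true) (h2 : p a = false) :
    (l1 ++ a :: l2).takeWhile p = l1 := by
  induction l1 with
  | nil => simp [List.takeWhile_cons, h2]
  | cons y ys ih =>
    have hih := ih (fun x hx => h1 x (by simp [hx]))
    simp [List.cons_append, List.takeWhile_cons, h1 y (by simp), hih]

lemma filter_flatMap {α β : Type*} (l : List α) (g : α → List β) (p : β → Bool) :
    (l.flatMap g).filter p = l.flatMap fun x => (g x).filter p := by
  induction l with
  | nil => rfl
  | cons y ys ih => simp [List.flatMap_cons, List.filter_append, ih]

lemma filter_range_single (N m₀ : ℕ) (p : ℕ → Bool) (hm : m₀ < N)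
    (h : ∀ m < N, (p m = true ↔ m = m₀)) : (List.range N).filter p = [m₀] := by
  induction N with
  | zero => omega
  | succ N ih =>
    rw [List.range_succ, List.filter_append]
    rcases Nat.lt_or_ge m₀ N with hlt | hge
    · rw [ih hlt (fun m hm' => h m (by omega))]
      have : p N = false := by
        rcases Bool.eq_false_or_eq_true (p N) with ht | hf
        · exfalso; have := (h N (by omega)).mp ht; omega
        · exact hf
      simp [this]
    · have hm0 : m₀ = N := by omega
      subst hm0
      have h1 : (List.range m₀).filter p = [] := by
        rw [List.filter_eq_nil_iff]
        intro a ha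
        rw [List.mem_range] at ha
        intro hpa
        have := (h a (by omega)).mp hpa; omega
      have h2 : p m₀ = true := (h m₀ (by omega)).mpr rfl
      simp [h1, h2]

lemma filter_single_map (N m₀ : ℕ) (f : ℕ → (ℕ → ℤ)) (p : (ℕ → ℤ) → Bool) (hm : m₀ < N)
    (h : ∀ m < N, (p (f m) = true ↔ m = m₀)) :
    ((List.range N).map f).filter p = [f m₀] := by
  rw [List.filter_map, filter_range_single N m₀ (p ∘ f) hm (fun m hm' => h m hm')]
  rfl

lemma filter_none_map (N : ℕ) (f : ℕ → (ℕ → ℤ)) (p : (ℕ → ℤ) → Bool)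
    (h : ∀ m < N, p (f m) = false) :
    ((List.range N).map f).filter p = [] := by
  rw [List.filter_map]
  have : (List.range N).filter (p ∘ f) = [] := by
    rw [List.filter_eq_nil_iff]
    intro a ha; rw [List.mem_range] at ha
    simp [h a ha]
  rw [this]; rfl

lemma ip_single (n a : ℕ) (ha : a ≤ n) (u : ℕ → ℤ) :
    ∑ j ∈ Finset.range (n+1), stdE a j * u j = u a := by
  rw [Finset.sum_eq_single_of_mem a (Finset.mem_range.mpr (by omega))]
  · simp [stdE]
  · intro b _ hb; simp [stdE, hb]

lemma ip_alpha_lt (n i : ℕ) (hi : i < n) (u : ℕ → ℤ) :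
    ipD n (alphaD n i) u = u i - u (i+1) := by
  rw [ipD, alphaD, if_neg (by omega)]
  simp only [Pi.sub_apply, sub_mul]
  rw [Finset.sum_sub_distrib, ip_single n i (by omega) u, ip_single n (i+1) (by omega) u]

lemma ip_alpha_top (n : ℕ) (hn : 4 ≤ n) (u : ℕ → ℤ) :
    ipD n (alphaD n n) u = u (n-1) + u n := by
  rw [ipD, alphaD, if_pos rfl]
  simp only [Pi.add_apply, add_mul]
  rw [Finset.sum_add_distrib, ip_single n (n-1) (by omega) u, ip_single n n le_rfl u]

lemma mem_pairD {n i : ℕ} {x : ℕ → ℤ} (hx : x ∈ pairD n i) :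
    x = betaD i (n-1) ∨ x = gammaD i n := by
  unfold pairD at hx
  split_ifs at hx <;> simp at hx <;> tauto

lemma flatMap_map' {α β γ : Type*} (l : List α) (f : α → β) (g : β → List γ) :
    (l.map f).flatMap g = l.flatMap fun x => g (f x) := by
  induction l with
  | nil => rfl
  | cons y ys ih => simp [ih]

lemma flatMap_congr' {α γ : Type*} (l : List α) (f g : α → List γ)
    (h : ∀ x ∈ l, f x = g x) : l.flatMap f = l.flatMap g := by
  induction l with
  | nil => rfl
  | cons y ys ih =>
    simp only [List.flatMap_cons, h y (by simp)]
    rw [ih (fun x hx => h x (by simp [hx]))]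

lemma alpha_eq_beta (n i : ℕ) (hi : i ≠ n) : alphaD n i = betaD i i := by
  rw [alphaD, if_neg hi]; rfl

lemma eta_le (n i : ℕ) (hn : 4 ≤ n) (hi : 1 ≤ i) (hin : i ≤ n-2) :
    etaListD n i (wordD n) =
      (List.range (i-1)).flatMap fun j' => [betaD (j'+1) (i-1), gammaD (j'+1) (i+1)] := by
  unfold etaListD
  rw [word_rootSeq n hn,
    show n-1 = (i-1) + (n-i) by omega, List.range_add, List.flatMap_append, flatMap_map',
    show n-i = (n-i-1)+1 by omega, List.range_succ_eq_map, List.flatMap_cons]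
  have hGex : ∃ rest, GDlist n (i-1+0+1) = betaD i i :: rest := by
    rw [show i-1+0+1 = i by omega]
    unfold GDlist
    rw [show n-1-i = (n-1-i-1)+1 by omega, List.range_succ_eq_map, List.map_cons,
      List.cons_append, List.cons_append]
    exact ⟨_, rfl⟩
  obtain ⟨rest, hG⟩ := hGex
  rw [hG, List.cons_append]
  rw [takeWhile_middle _ _ _ _ ?h1 ?h2]
  case h2 => rw [alpha_eq_beta n i (by omega)]; simp
  case h1 =>
    intro x hx
    rw [List.mem_flatMap] at hx
    obtain ⟨j', hj', hxG⟩ := hx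
    rw [List.mem_range] at hj'
    rw [decide_eq_true_eq, ne_eq, alpha_eq_beta n i (by omega)]
    unfold GDlist at hxG
    rw [List.mem_append, List.mem_append] at hxG
    rcases hxG with (hb | hp) | hg
    · rw [List.mem_map] at hb
      obtain ⟨m, hm, rfl⟩ := hb
      rw [List.mem_range] at hm
      intro heq
      have := congrFun heq i
      simp only [betaD, stdE, Pi.sub_apply] at this
      split_ifs at this <;> omega
    · rcases mem_pairD hp with rfl | rfl
      · intro heq
        have := congrFun heq i
        simp only [betaD, stdE, Pi.sub_apply] at this
        split_ifs at this <;> omega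
      · intro heq
        have := congrFun heq (i+1)
        simp only [betaD, gammaD, stdE, Pi.sub_apply, Pi.add_apply] at this
        split_ifs at this <;> omega
    · rw [List.mem_map] at hg
      obtain ⟨t, ht, rfl⟩ := hg
      rw [List.mem_range] at ht
      intro heq
      have := congrFun heq (i+1)
      simp only [betaD, gammaD, stdE, Pi.sub_apply, Pi.add_apply] at this
      split_ifs at this <;> omega
  -- now the filter
  rw [List.filter_flatMap]
  apply flatMap_congr'
  intro j' hj'
  rw [List.mem_range] at hj'
  unfold GDlist
  rw [List.filter_append, List.filter_append]
  have hc1 : (((List.range (n-1-(j'+1))).map fun m => betaD (j'+1) (j'+1+m)).filter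
      fun η => decide (ipD n (alphaD n i) η < 0)) = [betaD (j'+1) (j'+1+(i-j'-2))] := by
    apply filter_single_map _ _ _ _ (by omega)
    intro m hm
    rw [decide_eq_true_eq, ip_alpha_lt n i (by omega)]
    simp only [betaD, stdE, Pi.sub_apply]
    split_ifs <;> omega
  have hb1 : (decide (ipD n (alphaD n i) (betaD (j'+1) (n-1)) < 0)) = false := by
    rw [decide_eq_false_iff_not, ip_alpha_lt n i (by omega)]
    simp only [betaD, stdE, Pi.sub_apply]
    split_ifs <;> omega
  have hb2 : (decide (ipD n (alphaD n i) (gammaD (j'+1) n) < 0)) = false := by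
    rw [decide_eq_false_iff_not, ip_alpha_lt n i (by omega)]
    simp only [gammaD, stdE, Pi.add_apply]
    split_ifs <;> omega
  have hc2 : ((pairD n (j'+1)).filter fun η => decide (ipD n (alphaD n i) η < 0)) = [] := by
    unfold pairD
    split_ifs <;> simp [List.filter_cons, hb1, hb2]
  have hc3 : (((List.range (n-1-(j'+1))).map fun t => gammaD (j'+1) (n-1-t)).filter
      fun η => decide (ipD n (alphaD n i) η < 0)) = [gammaD (j'+1) (n-1-(n-i-2))] := by
    apply filter_single_map _ (n-i-2) _ _ (by omega)
    intro m hm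
    rw [decide_eq_true_eq, ip_alpha_lt n i (by omega)]
    simp only [gammaD, stdE, Pi.add_apply]
    split_ifs <;> omega
  rw [hc1, hc2, hc3, show j'+1+(i-j'-2) = i-1 by omega, show n-1-(n-i-2) = i+1 by omega]
  rfl

lemma mem_L1_forms {n N : ℕ} {x : ℕ → ℤ}
    (hx : x ∈ (List.range N).flatMap fun i' => GDlist n (i'+1)) :
    (∃ j' m, j' < N ∧ m < n-1-(j'+1) ∧ x = betaD (j'+1) (j'+1+m)) ∨
    (∃ j', j' < N ∧ x = betaD (j'+1) (n-1)) ∨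
    (∃ j', j' < N ∧ x = gammaD (j'+1) n) ∨
    (∃ j' t, j' < N ∧ t < n-1-(j'+1) ∧ x = gammaD (j'+1) (n-1-t)) := by
  rw [List.mem_flatMap] at hx
  obtain ⟨j', hj', hxG⟩ := hx
  rw [List.mem_range] at hj'
  unfold GDlist at hxG
  rw [List.mem_append, List.mem_append] at hxG
  rcases hxG with (hb | hp) | hg
  · rw [List.mem_map] at hb
    obtain ⟨m, hm, rfl⟩ := hb
    rw [List.mem_range] at hm
    exact Or.inl ⟨j', m, hj', hm, rfl⟩
  · rcases mem_pairD hp with rfl | rfl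
    · exact Or.inr (Or.inl ⟨j', hj', rfl⟩)
    · exact Or.inr (Or.inr (Or.inl ⟨j', hj', rfl⟩))
  · rw [List.mem_map] at hg
    obtain ⟨t, ht, rfl⟩ := hg
    rw [List.mem_range] at ht
    exact Or.inr (Or.inr (Or.inr ⟨j', t, hj', ht, rfl⟩))

lemma filter_L1_nm1 (n : ℕ) (hn : 4 ≤ n) :
    (((List.range (n-2)).flatMap fun i' => GDlist n (i'+1)).filter
      fun η => decide (ipD n (alphaD n (n-1)) η < 0)) =
    (List.range (n-2)).flatMap fun j' => [betaD (j'+1) (n-2), gammaD (j'+1) n] := by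
  rw [List.filter_flatMap]
  apply flatMap_congr'
  intro j' hj'
  rw [List.mem_range] at hj'
  unfold GDlist
  rw [List.filter_append, List.filter_append]
  have hc1 : (((List.range (n-1-(j'+1))).map fun m => betaD (j'+1) (j'+1+m)).filter
      fun η => decide (ipD n (alphaD n (n-1)) η < 0)) = [betaD (j'+1) (j'+1+(n-3-j'))] := by
    apply filter_single_map _ _ _ _ (by omega)
    intro m hm
    rw [decide_eq_true_eq, ip_alpha_lt n (n-1) (by omega)]
    simp only [betaD, stdE, Pi.sub_apply]
    split_ifs <;> omega
  have hb1 : (decide (ipD n (alphaD n (n-1)) (betaD (j'+1) (n-1)) < 0)) = false := by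
    rw [decide_eq_false_iff_not, ip_alpha_lt n (n-1) (by omega)]
    simp only [betaD, stdE, Pi.sub_apply]
    split_ifs <;> omega
  have hb2 : (decide (ipD n (alphaD n (n-1)) (gammaD (j'+1) n) < 0)) = true := by
    rw [decide_eq_true_eq, ip_alpha_lt n (n-1) (by omega)]
    simp only [gammaD, stdE, Pi.add_apply]
    split_ifs <;> omega
  have hc2 : ((pairD n (j'+1)).filter fun η => decide (ipD n (alphaD n (n-1)) η < 0))
      = [gammaD (j'+1) n] := by
    unfold pairD
    split_ifs <;> simp [List.filter_cons, hb1, hb2]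
  have hc3 : (((List.range (n-1-(j'+1))).map fun t => gammaD (j'+1) (n-1-t)).filter
      fun η => decide (ipD n (alphaD n (n-1)) η < 0)) = [] := by
    apply filter_none_map
    intro m hm
    rw [decide_eq_false_iff_not, ip_alpha_lt n (n-1) (by omega)]
    simp only [gammaD, stdE, Pi.add_apply]
    split_ifs <;> omega
  rw [hc1, hc2, hc3, show j'+1+(n-3-j') = n-2 by omega]
  rfl

lemma filter_L1_top (n : ℕ) (hn : 4 ≤ n) :
    (((List.range (n-2)).flatMap fun i' => GDlist n (i'+1)).filter
      fun η => decide (ipD n (alphaD n n) η < 0)) =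
    (List.range (n-2)).flatMap fun j' => [betaD (j'+1) (n-2), betaD (j'+1) (n-1)] := by
  rw [List.filter_flatMap]
  apply flatMap_congr'
  intro j' hj'
  rw [List.mem_range] at hj'
  unfold GDlist
  rw [List.filter_append, List.filter_append]
  have hc1 : (((List.range (n-1-(j'+1))).map fun m => betaD (j'+1) (j'+1+m)).filter
      fun η => decide (ipD n (alphaD n n) η < 0)) = [betaD (j'+1) (j'+1+(n-3-j'))] := by
    apply filter_single_map _ _ _ _ (by omega)
    intro m hm
    rw [decide_eq_true_eq, ip_alpha_top n hn]
    simp only [betaD, stdE, Pi.sub_apply]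
    split_ifs <;> omega
  have hb1 : (decide (ipD n (alphaD n n) (betaD (j'+1) (n-1)) < 0)) = true := by
    rw [decide_eq_true_eq, ip_alpha_top n hn]
    simp only [betaD, stdE, Pi.sub_apply]
    split_ifs <;> omega
  have hb2 : (decide (ipD n (alphaD n n) (gammaD (j'+1) n) < 0)) = false := by
    rw [decide_eq_false_iff_not, ip_alpha_top n hn]
    simp only [gammaD, stdE, Pi.add_apply]
    split_ifs <;> omega
  have hc2 : ((pairD n (j'+1)).filter fun η => decide (ipD n (alphaD n n) η < 0))
      = [betaD (j'+1) (n-1)] := by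
    unfold pairD
    split_ifs <;> simp [List.filter_cons, hb1, hb2]
  have hc3 : (((List.range (n-1-(j'+1))).map fun t => gammaD (j'+1) (n-1-t)).filter
      fun η => decide (ipD n (alphaD n n) η < 0)) = [] := by
    apply filter_none_map
    intro m hm
    rw [decide_eq_false_iff_not, ip_alpha_top n hn]
    simp only [gammaD, stdE, Pi.add_apply]
    split_ifs <;> omega
  rw [hc1, hc2, hc3, show j'+1+(n-3-j') = n-2 by omega]
  rfl

lemma eta_nm1 (n : ℕ) (hn : 4 ≤ n) :
    etaListD n (n-1) (wordD n) =
      (List.range (n-2)).flatMap fun j' => [betaD (j'+1) (n-2), gammaD (j'+1) n] := by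
  unfold etaListD
  rw [word_rootSeq n hn]
  have hGtop : GDlist n (n-2+1) = pairD n (n-1) := by
    rw [show n-2+1 = n-1 by omega]
    unfold GDlist
    rw [show n-1-(n-1) = 0 by omega]
    simp
  have hsplit : ((List.range (n-1)).flatMap fun i' => GDlist n (i'+1)) =
      (((List.range (n-2)).flatMap fun i' => GDlist n (i'+1)) ++ pairD n (n-1)) := by
    rw [show n-1 = (n-2)+1 by omega, List.range_succ, List.flatMap_append]
    simp only [List.flatMap_cons, List.flatMap_nil, List.append_nil]
    rw [hGtop, show (n-2)+1 = n-1 by omega]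
  rw [hsplit]
  have hL1 : ∀ x ∈ (List.range (n-2)).flatMap fun i' => GDlist n (i'+1),
      (fun β => decide (β ≠ alphaD n (n-1))) x = true := by
    intro x hx
    rw [decide_eq_true_eq, ne_eq, alpha_eq_beta n (n-1) (by omega)]
    rcases mem_L1_forms hx with ⟨j', m, hj', hm, rfl⟩ | ⟨j', hj', rfl⟩ | ⟨j', hj', rfl⟩ |
      ⟨j', t, hj', ht, rfl⟩
    · intro heq
      have := congrFun heq (n-1)
      simp only [betaD, stdE, Pi.sub_apply] at this
      split_ifs at this <;> omega
    · intro heq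
      have := congrFun heq (n-1)
      simp only [betaD, stdE, Pi.sub_apply] at this
      split_ifs at this <;> omega
    · intro heq
      have := congrFun heq n
      simp only [betaD, gammaD, stdE, Pi.sub_apply, Pi.add_apply] at this
      split_ifs at this <;> omega
    · intro heq
      have := congrFun heq n
      simp only [betaD, gammaD, stdE, Pi.sub_apply, Pi.add_apply] at this
      split_ifs at this <;> omega
  have hgne : (fun β => decide (β ≠ alphaD n (n-1))) (gammaD (n-1) n) = true := by
    rw [decide_eq_true_eq, ne_eq, alpha_eq_beta n (n-1) (by omega)]
    intro heq
    have := congrFun heq n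
    simp only [betaD, gammaD, stdE, Pi.sub_apply, Pi.add_apply] at this
    split_ifs at this <;> omega
  have hbeq : (fun β => decide (β ≠ alphaD n (n-1))) (betaD (n-1) (n-1)) = false := by
    rw [alpha_eq_beta n (n-1) (by omega)]
    simp
  have hgip : (decide (ipD n (alphaD n (n-1)) (gammaD (n-1) n) < 0)) = false := by
    rw [decide_eq_false_iff_not, ip_alpha_lt n (n-1) (by omega)]
    simp only [gammaD, stdE, Pi.add_apply]
    split_ifs <;> omega
  rcases Nat.mod_two_eq_zero_or_one (n-1) with hpar | hpar
  · rw [pairD, if_neg (by omega)]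
    rw [show ((List.range (n-2)).flatMap fun i' => GDlist n (i'+1)) ++
        [gammaD (n-1) n, betaD (n-1) (n-1)] =
        (((List.range (n-2)).flatMap fun i' => GDlist n (i'+1)) ++ [gammaD (n-1) n]) ++
        betaD (n-1) (n-1) :: [] by simp]
    rw [takeWhile_middle (fun β => decide (β ≠ alphaD n (n-1))) _ _ _ ?h1 hbeq]
    case h1 =>
      intro x hx
      rw [List.mem_append] at hx
      rcases hx with hx | hx
      · exact hL1 x hx
      · rw [List.mem_singleton] at hx
        subst hx
        exact hgne
    rw [List.filter_append]
    have : ([gammaD (n-1) n].filter fun η => decide (ipD n (alphaD n (n-1)) η < 0)) = [] := by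
      simp [List.filter_cons, hgip]
    rw [this, List.append_nil, filter_L1_nm1 n hn]
  · rw [pairD, if_pos hpar]
    rw [show ((List.range (n-2)).flatMap fun i' => GDlist n (i'+1)) ++
        [betaD (n-1) (n-1), gammaD (n-1) n] =
        ((List.range (n-2)).flatMap fun i' => GDlist n (i'+1)) ++
        betaD (n-1) (n-1) :: [gammaD (n-1) n] by simp]
    rw [takeWhile_middle (fun β => decide (β ≠ alphaD n (n-1))) _ _ _ hL1 hbeq,
      filter_L1_nm1 n hn]

lemma eta_top (n : ℕ) (hn : 4 ≤ n) :
    etaListD n n (wordD n) =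
      (List.range (n-2)).flatMap fun j' => [betaD (j'+1) (n-2), betaD (j'+1) (n-1)] := by
  unfold etaListD
  rw [word_rootSeq n hn]
  have hGtop : GDlist n (n-2+1) = pairD n (n-1) := by
    rw [show n-2+1 = n-1 by omega]
    unfold GDlist
    rw [show n-1-(n-1) = 0 by omega]
    simp
  have hsplit : ((List.range (n-1)).flatMap fun i' => GDlist n (i'+1)) =
      (((List.range (n-2)).flatMap fun i' => GDlist n (i'+1)) ++ pairD n (n-1)) := by
    rw [show n-1 = (n-2)+1 by omega, List.range_succ, List.flatMap_append]
    simp only [List.flatMap_cons, List.flatMap_nil, List.append_nil]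
    rw [hGtop, show (n-2)+1 = n-1 by omega]
  rw [hsplit]
  have hga : alphaD n n = gammaD (n-1) n := by
    rw [alphaD, if_pos rfl]; rfl
  have hL1 : ∀ x ∈ (List.range (n-2)).flatMap fun i' => GDlist n (i'+1),
      (fun β => decide (β ≠ alphaD n n)) x = true := by
    intro x hx
    rw [decide_eq_true_eq, ne_eq, hga]
    rcases mem_L1_forms hx with ⟨j', m, hj', hm, rfl⟩ | ⟨j', hj', rfl⟩ | ⟨j', hj', rfl⟩ |
      ⟨j', t, hj', ht, rfl⟩
    · intro heq
      have := congrFun heq (n-1)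
      simp only [betaD, gammaD, stdE, Pi.sub_apply, Pi.add_apply] at this
      split_ifs at this <;> omega
    · intro heq
      have := congrFun heq n
      simp only [betaD, gammaD, stdE, Pi.sub_apply, Pi.add_apply] at this
      split_ifs at this <;> omega
    · intro heq
      have := congrFun heq (n-1)
      simp only [gammaD, stdE, Pi.add_apply] at this
      split_ifs at this <;> omega
    · intro heq
      have := congrFun heq n
      simp only [gammaD, stdE, Pi.add_apply] at this
      split_ifs at this <;> omega
  have hbne : (fun β => decide (β ≠ alphaD n n)) (betaD (n-1) (n-1)) = true := by
    rw [decide_eq_true_eq, ne_eq, hga]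
    intro heq
    have := congrFun heq n
    simp only [betaD, gammaD, stdE, Pi.sub_apply, Pi.add_apply] at this
    split_ifs at this <;> omega
  have hgeq : (fun β => decide (β ≠ alphaD n n)) (gammaD (n-1) n) = false := by
    rw [hga]
    simp
  have hbip : (decide (ipD n (alphaD n n) (betaD (n-1) (n-1)) < 0)) = false := by
    rw [decide_eq_false_iff_not, ip_alpha_top n hn]
    simp only [betaD, stdE, Pi.sub_apply]
    split_ifs <;> omega
  rcases Nat.mod_two_eq_zero_or_one (n-1) with hpar | hpar
  · rw [pairD, if_neg (by omega)]
    rw [show ((List.range (n-2)).flatMap fun i' => GDlist n (i'+1)) ++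
        [gammaD (n-1) n, betaD (n-1) (n-1)] =
        ((List.range (n-2)).flatMap fun i' => GDlist n (i'+1)) ++
        gammaD (n-1) n :: [betaD (n-1) (n-1)] by simp]
    rw [takeWhile_middle (fun β => decide (β ≠ alphaD n n)) _ _ _ hL1 hgeq, filter_L1_top n hn]
  · rw [pairD, if_pos hpar]
    rw [show ((List.range (n-2)).flatMap fun i' => GDlist n (i'+1)) ++
        [betaD (n-1) (n-1), gammaD (n-1) n] =
        (((List.range (n-2)).flatMap fun i' => GDlist n (i'+1)) ++ [betaD (n-1) (n-1)]) ++
        gammaD (n-1) n :: [] by simp]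
    rw [takeWhile_middle (fun β => decide (β ≠ alphaD n n)) _ _ _ ?h1 hgeq]
    case h1 =>
      intro x hx
      rw [List.mem_append] at hx
      rcases hx with hx | hx
      · exact hL1 x hx
      · rw [List.mem_singleton] at hx
        subst hx
        exact hbne
    rw [List.filter_append]
    have : ([betaD (n-1) (n-1)].filter fun η => decide (ipD n (alphaD n n) η < 0)) = [] := by
      simp [List.filter_cons, hbip]
    rw [this, List.append_nil, filter_L1_top n hn]

lemma nu_beta (n i j : ℕ) (hi : 1 ≤ i) (hin : i ≤ n-1) (hn : 4 ≤ n) :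
    betaD (j+1) (i-1) + alphaD n i = betaD (j+1) i := by
  rw [alpha_eq_beta n i (by omega)]
  funext m
  simp only [betaD, stdE, Pi.add_apply, Pi.sub_apply]
  split_ifs <;> omega

lemma nu_gamma (n i j : ℕ) (hi : 1 ≤ i) (hin : i ≤ n-1) (hn : 4 ≤ n) :
    gammaD (j+1) (i+1) + alphaD n i = gammaD (j+1) i := by
  rw [alpha_eq_beta n i (by omega)]
  funext m
  simp only [betaD, gammaD, stdE, Pi.add_apply, Pi.sub_apply]
  split_ifs <;> omega

lemma alpha_top_eq (n : ℕ) : alphaD n n = gammaD (n-1) n := by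
  rw [alphaD, if_pos rfl]; rfl

lemma nu_top1 (n j : ℕ) (hn : 4 ≤ n) :
    betaD (j+1) (n-2) + alphaD n n = gammaD (j+1) n := by
  rw [alpha_top_eq]
  funext m
  simp only [betaD, gammaD, stdE, Pi.add_apply, Pi.sub_apply]
  split_ifs <;> omega

lemma nu_top2 (n j : ℕ) (hn : 4 ≤ n) :
    betaD (j+1) (n-1) + alphaD n n = gammaD (j+1) (n-1) := by
  rw [alpha_top_eq]
  funext m
  simp only [betaD, gammaD, stdE, Pi.add_apply, Pi.sub_apply]
  split_ifs <;> omega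

lemma len_flat (N : ℕ) (u w : ℕ → (ℕ → ℤ)) :
    ((List.range N).flatMap fun j' => [u j', w j']).length = 2*N := by
  induction N with
  | zero => rfl
  | succ N ih =>
    rw [List.range_succ, List.flatMap_append, List.length_append, ih]
    simp
    omega

lemma brString_flat (N : ℕ) (u w : ℕ → (ℕ → ℤ)) (c : (ℕ → ℤ) → ℕ) (a : ℕ → ℤ) :
    ((List.range (((List.range N).flatMap fun j' => [u j', w j']).length)).flatMap fun j =>
      List.replicate (c (((List.range N).flatMap fun j' => [u j', w j']).getD j 0 + a))
        (false, j) ++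
      List.replicate (c (((List.range N).flatMap fun j' => [u j', w j']).getD j 0)) (true, j)) =
    (List.range N).flatMap fun j' =>
      List.replicate (c (u j' + a)) (false, 2*j') ++ List.replicate (c (u j')) (true, 2*j') ++
      List.replicate (c (w j' + a)) (false, 2*j'+1) ++ List.replicate (c (w j')) (true, 2*j'+1)
    := by
  induction N with
  | zero => rfl
  | succ N ih =>
    have hE : ((List.range (N+1)).flatMap fun j' => [u j', w j']) =
        ((List.range N).flatMap fun j' => [u j', w j']) ++ [u N, w N] := by
      rw [List.range_succ, List.flatMap_append]
      simp
    rw [hE, List.length_append, len_flat N u w,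
      show 2*N + ([u N, w N] : List (ℕ → ℤ)).length = (2*N+1)+1 by simp,
      List.range_succ, List.range_succ, List.flatMap_append, List.flatMap_append]
    simp only [List.flatMap_cons, List.flatMap_nil, List.append_nil]
    have hg0 : (((List.range N).flatMap fun j' => [u j', w j']) ++ [u N, w N]).getD (2*N) 0
        = u N := by
      rw [List.getD_append_right _ _ _ _ (by rw [len_flat N u w])]
      rw [len_flat N u w]
      simp
    have hg1 : (((List.range N).flatMap fun j' => [u j', w j']) ++ [u N, w N]).getD (2*N+1) 0
        = w N := by
      rw [List.getD_append_right _ _ _ _ (by rw [len_flat N u w]; omega)]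
      rw [len_flat N u w, show 2*N+1-2*N = 1 by omega]
      simp
    have hmain : ((List.range (2*N)).flatMap fun j =>
        List.replicate (c ((((List.range N).flatMap fun j' => [u j', w j']) ++
          [u N, w N]).getD j 0 + a)) (false, j) ++
        List.replicate (c ((((List.range N).flatMap fun j' => [u j', w j']) ++
          [u N, w N]).getD j 0)) (true, j)) =
        ((List.range (2*N)).flatMap fun j =>
        List.replicate (c (((List.range N).flatMap fun j' => [u j', w j']).getD j 0 + a))
          (false, j) ++
        List.replicate (c (((List.range N).flatMap fun j' => [u j', w j']).getD j 0))
          (true, j)) := by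
      apply flatMap_congr'
      intro j hj
      rw [List.mem_range] at hj
      rw [List.getD_append _ _ _ _ (by rw [len_flat N u w]; omega)]
    have ih' := ih
    rw [len_flat N u w] at ih'
    rw [hmain, ih', hg0, hg1, List.range_succ, List.flatMap_append]
    simp [List.append_assoc]

lemma eta_unified (n i : ℕ) (hn : 4 ≤ n) (hi : 1 ≤ i) (hin : i ≤ n-1) :
    etaListD n i (wordD n) =
      (List.range (i-1)).flatMap fun j' => [betaD (j'+1) (i-1), gammaD (j'+1) (i+1)] := by
  by_cases hc : i ≤ n-2
  · exact eta_le n i hn hi hc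
  · have h : i = n-1 := by omega
    rw [h, show n-1-1 = n-2 by omega, show n-1+1 = n by omega]
    exact eta_nm1 n hn
end Helpers

/-- For the reduced word `𝐢^D` of type `D_n`: (a) for `1 ≤ i ≤ n-1` the
roots `η` preceding `α_i = β_(i,i)` in the induced order with `(α_i | η) < 0` are exactly,
in order, `β_(1,i-1), γ_(1,i+1), β_(2,i-1), γ_(2,i+1), …, β_(i-1,i-1), γ_(i-1,i+1)`, with
`ν = η + α_i` given by `β_(j,i)` for `η = β_(j,i-1)` and `γ_(j,i)` for `η = γ_(j,i+1)`;
(b) for `i = n` they are `β_(1,n-2), β_(1,n-1), …, β_(n-2,n-2), β_(n-2,n-1)`, with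
`ν = γ_(j,n)` for `η = β_(j,n-2)` and `ν = γ_(j,n-1)` for `η = β_(j,n-1)`. Consequently the
bracket string `S_i^(𝐢^D)(𝐜)` has the displayed explicit form. -/
theorem statement16 (n : ℕ) (hn : 4 ≤ n) :
    (∀ i, 1 ≤ i → i ≤ n-1 →
      (etaListD n i (wordD n) =
        (List.range (i-1)).flatMap fun j' => [betaD (j'+1) (i-1), gammaD (j'+1) (i+1)]) ∧
      (∀ j', j' < i-1 →
        betaD (j'+1) (i-1) + alphaD n i = betaD (j'+1) i ∧
        gammaD (j'+1) (i+1) + alphaD n i = gammaD (j'+1) i) ∧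
      (∀ c : (ℕ → ℤ) → ℕ,
        brStringD n i (wordD n) c =
          ((List.range (i-1)).flatMap fun j' =>
            List.replicate (c (betaD (j'+1) i)) (false, 2*j') ++
            List.replicate (c (betaD (j'+1) (i-1))) (true, 2*j') ++
            List.replicate (c (gammaD (j'+1) i)) (false, 2*j'+1) ++
            List.replicate (c (gammaD (j'+1) (i+1))) (true, 2*j'+1)) ++
          List.replicate (c (betaD i i)) (false, 2*(i-1)))) ∧
    ((etaListD n n (wordD n) =
        (List.range (n-2)).flatMap fun j' => [betaD (j'+1) (n-2), betaD (j'+1) (n-1)]) ∧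
      (∀ j', j' < n-2 →
        betaD (j'+1) (n-2) + alphaD n n = gammaD (j'+1) n ∧
        betaD (j'+1) (n-1) + alphaD n n = gammaD (j'+1) (n-1)) ∧
      (∀ c : (ℕ → ℤ) → ℕ,
        brStringD n n (wordD n) c =
          ((List.range (n-2)).flatMap fun j' =>
            List.replicate (c (gammaD (j'+1) n)) (false, 2*j') ++
            List.replicate (c (betaD (j'+1) (n-2))) (true, 2*j') ++
            List.replicate (c (gammaD (j'+1) (n-1))) (false, 2*j'+1) ++
            List.replicate (c (betaD (j'+1) (n-1))) (true, 2*j'+1)) ++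
          List.replicate (c (gammaD (n-1) n)) (false, 2*(n-2)))) := by
  constructor
  · intro i hi1 hi2
    refine ⟨eta_unified n i hn hi1 hi2, ?_, ?_⟩
    · intro j' _
      exact ⟨nu_beta n i j' hi1 hi2 hn, nu_gamma n i j' hi1 hi2 hn⟩
    · intro c
      unfold brStringD
      rw [eta_unified n i hn hi1 hi2,
        brString_flat (i-1) (fun j' => betaD (j'+1) (i-1)) (fun j' => gammaD (j'+1) (i+1)) c
          (alphaD n i),
        len_flat (i-1) (fun j' => betaD (j'+1) (i-1)) (fun j' => gammaD (j'+1) (i+1))]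
      congr 1
      · apply flatMap_congr'
        intro j' hj'
        rw [List.mem_range] at hj'
        rw [nu_beta n i j' hi1 hi2 hn, nu_gamma n i j' hi1 hi2 hn]
      · rw [alpha_eq_beta n i (by omega)]
  · refine ⟨eta_top n hn, ?_, ?_⟩
    · intro j' _
      exact ⟨nu_top1 n j' hn, nu_top2 n j' hn⟩
    · intro c
      unfold brStringD
      rw [eta_top n hn,
        brString_flat (n-2) (fun j' => betaD (j'+1) (n-2)) (fun j' => betaD (j'+1) (n-1)) c
          (alphaD n n),
        len_flat (n-2) (fun j' => betaD (j'+1) (n-2)) (fun j' => betaD (j'+1) (n-1))]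
      congr 1
      · apply flatMap_congr'
        intro j' hj'
        rw [List.mem_range] at hj'
        rw [nu_top1 n j' hn, nu_top2 n j' hn]
      · rw [alpha_top_eq]

end
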